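/- For real s₁ > 1, s₂ > 1, 0 < a ≤ 1, and z₁, z₂ ∈ [-1,1], Γ(s₁)Γ(s₂)·Φ₂(s₁,s₂,a,z₁,z₂) = ∫_0^∞ (y^{s₂-1}/(e^y − z₂)) ∫_0^∞ (x^{s₁-1} e^{(1-a)(x+y)}/(e^{x+y} − z₁)) dx dy. -/

import Mathlib

open MeasureTheory Set

private lemma summable_aux {a s : ℝ} (ha : 0 < a) (hs : 1 < s) :
    Summable (fun m : ℕ => (1 / ((m : ℝ) + a)) ^ s) := by
  refine ((Real.summable_one_div_nat_add_rpow a s).2 hs).congr fun m => ?_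
  rw [abs_of_pos (by positivity), Real.div_rpow (by norm_num) (by positivity), Real.one_rpow]

private lemma integrableOn_rpow_exp {s b : ℝ} (hs : 0 < s) (hb : 0 < b) :
    IntegrableOn (fun x : ℝ => x ^ (s - 1) * Real.exp (-(b * x))) (Ioi 0) := by
  refine (integrableOn_rpow_mul_exp_neg_mul_rpow (p := 1) (s := s - 1) (b := b)
    (by linarith) one_pos hb).congr_fun (fun x hx => ?_) measurableSet_Ioi
  beta_reduce
  rw [Real.rpow_one, neg_mul]

private lemma norm_int_eq {s b : ℝ} (hs : 0 < s) (hb : 0 < b) :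
    ∫ x in Ioi (0:ℝ), ‖x ^ (s - 1) * Real.exp (-(b * x))‖ = (1 / b) ^ s * Real.Gamma s := by
  rw [← Real.integral_rpow_mul_exp_neg_mul_Ioi hs hb]
  refine setIntegral_congr_fun measurableSet_Ioi fun x hx => ?_
  have hx0 : 0 < x := hx
  exact Real.norm_of_nonneg (mul_nonneg (Real.rpow_nonneg hx0.le _) (Real.exp_pos _).le)

private lemma tsum_geom_exp {z : ℝ} (hz : |z| ≤ 1) {t : ℝ} (ht : 0 < t) (a : ℝ) :
    ∑' m : ℕ, z ^ m * Real.exp (-(((m : ℝ) + a) * t))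
      = Real.exp ((1 - a) * t) / (Real.exp t - z) := by
  have hz1 : z ≤ 1 := le_trans (le_abs_self z) hz
  have het : Real.exp (-t) < 1 := by rw [Real.exp_lt_one_iff]; linarith
  have hr : |z * Real.exp (-t)| < 1 := by
    rw [abs_mul, abs_of_pos (Real.exp_pos _)]
    calc |z| * Real.exp (-t) ≤ 1 * Real.exp (-t) :=
          mul_le_mul_of_nonneg_right hz (Real.exp_pos _).le
      _ < 1 := by simpa using het
  have hden : 0 < Real.exp t - z := by linarith [Real.add_one_le_exp t]
  have hden2 : 0 < 1 - z * Real.exp (-t) := by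
    have := abs_lt.1 hr
    linarith [this.2]
  have h1 : ∀ m : ℕ, z ^ m * Real.exp (-(((m : ℝ) + a) * t))
      = (z * Real.exp (-t)) ^ m * Real.exp (-(a * t)) := by
    intro m
    rw [mul_pow, ← Real.exp_nat_mul, mul_assoc, ← Real.exp_add]
    congr 1
    ring
  rw [tsum_congr h1, tsum_mul_right, tsum_geometric_of_norm_lt_one (by rw [Real.norm_eq_abs]; exact hr)]
  rw [inv_mul_eq_div, div_eq_div_iff hden2.ne' hden.ne']
  have h3 : Real.exp (-(a * t)) * Real.exp t = Real.exp ((1 - a) * t) := by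
    rw [← Real.exp_add]; congr 1; ring
  have h4 : Real.exp ((1 - a) * t) * Real.exp (-t) = Real.exp (-(a * t)) := by
    rw [← Real.exp_add]; congr 1; ring
  linear_combination h3 + z * h4

private lemma abs_coef_le_one {z : ℝ} (hz : |z| ≤ 1) (m : ℕ) {w : ℝ} (hw : 0 ≤ w) :
    |z ^ m * Real.exp (-w)| ≤ 1 := by
  rw [abs_mul, abs_pow, abs_of_pos (Real.exp_pos _)]
  have h1 : |z| ^ m ≤ 1 := pow_le_one₀ (abs_nonneg z) hz
  have h2 : Real.exp (-w) ≤ 1 := Real.exp_le_one_iff.2 (by linarith)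
  calc |z| ^ m * Real.exp (-w) ≤ 1 * 1 :=
        mul_le_mul h1 h2 (Real.exp_pos _).le one_pos.le
    _ = 1 := by norm_num

private lemma inner_integral {s a z : ℝ} (hs : 1 < s) (ha : 0 < a) (hz : |z| ≤ 1)
    {y : ℝ} (hy : 0 < y) :
    ∫ x in Ioi (0:ℝ), x ^ (s - 1) * Real.exp ((1 - a) * (x + y)) / (Real.exp (x + y) - z)
      = Real.Gamma s * ∑' m : ℕ, z ^ m * Real.exp (-(((m : ℝ) + a) * y)) / ((m : ℝ) + a) ^ s := by
  have hs0 : 0 < s := lt_trans one_pos hs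
  have hb : ∀ m : ℕ, (0:ℝ) < (m : ℝ) + a := fun m => by positivity
  set F : ℕ → ℝ → ℝ := fun m x => (z ^ m * Real.exp (-(((m : ℝ) + a) * y)))
      * (x ^ (s - 1) * Real.exp (-(((m : ℝ) + a) * x))) with hF
  have hFint : ∀ m, Integrable (F m) (volume.restrict (Ioi 0)) := fun m =>
    (integrableOn_rpow_exp hs0 (hb m)).const_mul _
  have hnorm : ∀ m, ∫ x in Ioi (0:ℝ), ‖F m x‖
      = |z ^ m * Real.exp (-(((m : ℝ) + a) * y))| * ((1 / ((m : ℝ) + a)) ^ s * Real.Gamma s) := by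
    intro m
    simp only [hF, norm_mul, Real.norm_eq_abs]
    rw [integral_const_mul, ← abs_mul]
    congr 1
    simpa [Real.norm_eq_abs, abs_mul] using norm_int_eq hs0 (hb m)
  have hsum : Summable fun m => ∫ x in Ioi (0:ℝ), ‖F m x‖ := by
    refine Summable.of_nonneg_of_le (fun m => integral_nonneg fun x => norm_nonneg _)
      (fun m => ?_) ((summable_aux ha hs).mul_right (Real.Gamma s))
    rw [hnorm m]
    have h1 : |z ^ m * Real.exp (-(((m : ℝ) + a) * y))| ≤ 1 :=
      abs_coef_le_one hz m (by positivity)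
    calc _ ≤ 1 * ((1 / ((m : ℝ) + a)) ^ s * Real.Gamma s) :=
          mul_le_mul_of_nonneg_right h1 (by positivity)
      _ = _ := one_mul _
  have hpt : ∀ x ∈ Ioi (0:ℝ),
      x ^ (s - 1) * Real.exp ((1 - a) * (x + y)) / (Real.exp (x + y) - z) = ∑' m, F m x := by
    intro x hx
    have hxy : 0 < x + y := by have : 0 < x := hx; linarith
    rw [mul_div_assoc, ← tsum_geom_exp hz hxy a, ← tsum_mul_left]
    refine tsum_congr fun m => ?_
    have he : Real.exp (-(((m : ℝ) + a) * (x + y)))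
        = Real.exp (-(((m : ℝ) + a) * y)) * Real.exp (-(((m : ℝ) + a) * x)) := by
      rw [← Real.exp_add]; congr 1; ring
    rw [he]; ring
  rw [setIntegral_congr_fun measurableSet_Ioi hpt,
    ← integral_tsum_of_summable_integral_norm hFint hsum, ← tsum_mul_left]
  refine tsum_congr fun m => ?_
  show ∫ x in Ioi (0:ℝ), (z ^ m * Real.exp (-(((m : ℝ) + a) * y)))
      * (x ^ (s - 1) * Real.exp (-(((m : ℝ) + a) * x))) = _
  rw [integral_const_mul, Real.integral_rpow_mul_exp_neg_mul_Ioi hs0 (hb m),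
    one_div, Real.inv_rpow (hb m).le]
  ring

private lemma outer_inner {s b z : ℝ} (hs : 1 < s) (hb : 0 < b) (hz : |z| ≤ 1) :
    ∫ y in Ioi (0:ℝ), y ^ (s - 1) * Real.exp (-(b * y)) / (Real.exp y - z)
      = Real.Gamma s * ∑' n : ℕ, z ^ n / ((n : ℝ) + 1 + b) ^ s := by
  have hs0 : 0 < s := lt_trans one_pos hs
  have hc : ∀ n : ℕ, (0:ℝ) < (n : ℝ) + 1 + b := fun n => by positivity
  set F : ℕ → ℝ → ℝ := fun n y => (z ^ n)
      * (y ^ (s - 1) * Real.exp (-(((n : ℝ) + 1 + b) * y))) with hF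
  have hFint : ∀ n, Integrable (F n) (volume.restrict (Ioi 0)) := fun n =>
    (integrableOn_rpow_exp hs0 (hc n)).const_mul _
  have hnorm : ∀ n, ∫ y in Ioi (0:ℝ), ‖F n y‖
      = |z ^ n| * ((1 / ((n : ℝ) + 1 + b)) ^ s * Real.Gamma s) := by
    intro n
    simp only [hF, norm_mul, Real.norm_eq_abs]
    rw [integral_const_mul]
    congr 1
    simpa [Real.norm_eq_abs, abs_mul] using norm_int_eq hs0 (hc n)
  have hsum : Summable fun n => ∫ y in Ioi (0:ℝ), ‖F n y‖ := by
    refine Summable.of_nonneg_of_le (fun n => integral_nonneg fun y => norm_nonneg _)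
      (fun n => ?_) (((summable_aux (show (0:ℝ) < 1 + b by linarith) hs).mul_right
        (Real.Gamma s)).congr fun n => by rw [show (n : ℝ) + (1 + b) = (n:ℝ) + 1 + b from by ring])
    rw [hnorm n]
    have h1 : |z ^ n| ≤ 1 := by
      rw [abs_pow]; exact pow_le_one₀ (abs_nonneg z) hz
    calc _ ≤ 1 * ((1 / ((n : ℝ) + 1 + b)) ^ s * Real.Gamma s) :=
          mul_le_mul_of_nonneg_right h1 (by positivity)
      _ = _ := one_mul _
  have hpt : ∀ y ∈ Ioi (0:ℝ),
      y ^ (s - 1) * Real.exp (-(b * y)) / (Real.exp y - z) = ∑' n, F n y := by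
    intro y hy
    have hy0 : 0 < y := hy
    have key : y ^ (s - 1) * Real.exp (-(b * y)) / (Real.exp y - z)
        = (y ^ (s - 1) * Real.exp (-(b * y)))
          * (Real.exp ((1 - (1:ℝ)) * y) / (Real.exp y - z)) := by
      rw [show ((1:ℝ) - 1) * y = 0 from by ring, Real.exp_zero]
      ring
    rw [key, ← tsum_geom_exp hz hy0 1, ← tsum_mul_left]
    refine tsum_congr fun n => ?_
    have he : Real.exp (-(b * y)) * Real.exp (-(((n : ℝ) + 1) * y))
        = Real.exp (-(((n : ℝ) + 1 + b) * y)) := by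
      rw [← Real.exp_add]; congr 1; ring
    linear_combination (y ^ (s - 1) * z ^ n) * he
  rw [setIntegral_congr_fun measurableSet_Ioi hpt,
    ← integral_tsum_of_summable_integral_norm hFint hsum, ← tsum_mul_left]
  refine tsum_congr fun n => ?_
  show ∫ y in Ioi (0:ℝ), (z ^ n)
      * (y ^ (s - 1) * Real.exp (-(((n : ℝ) + 1 + b) * y))) = _
  rw [integral_const_mul, Real.integral_rpow_mul_exp_neg_mul_Ioi hs0 (hc n),
    one_div, Real.inv_rpow (hc n).le]
  ring


/-- For real s₁ > 1, s₂ > 1, 0 < a ≤ 1, z₁, z₂ ∈ [-1,1],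
Γ(s₁)Γ(s₂)Φ₂(s₁,s₂,a,z₁,z₂)
  = ∫_0^∞ (y^{s₂-1}/(e^y−z₂)) ∫_0^∞ x^{s₁-1}e^{(1-a)(x+y)}/(e^{x+y}−z₁) dx dy,
where Φ₂(s₁,s₂,a,z₁,z₂) = ∑_{m≥0} z₁^m/(m+a)^{s₁} ∑_{n≥1} z₂^{n-1}/(m+n+a)^{s₂}. -/
theorem gamma_mul_doubleLerch_eq_integral (s₁ s₂ a z₁ z₂ : ℝ)
    (hs₁ : 1 < s₁) (hs₂ : 1 < s₂) (ha : 0 < a) (ha1 : a ≤ 1)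
    (hz₁ : -1 ≤ z₁) (hz₁' : z₁ ≤ 1) (hz₂ : -1 ≤ z₂) (hz₂' : z₂ ≤ 1) :
    Real.Gamma s₁ * Real.Gamma s₂
        * ∑' m : ℕ, (z₁ ^ m / ((m : ℝ) + a) ^ s₁
            * ∑' n : ℕ, z₂ ^ n / ((m : ℝ) + (n + 1) + a) ^ s₂)
      = ∫ y in Ioi (0 : ℝ), (y ^ (s₂ - 1) / (Real.exp y - z₂))
          * ∫ x in Ioi (0 : ℝ),
              x ^ (s₁ - 1) * Real.exp ((1 - a) * (x + y)) / (Real.exp (x + y) - z₁) := by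
  have hz₁a : |z₁| ≤ 1 := abs_le.2 ⟨hz₁, hz₁'⟩
  have hz₂a : |z₂| ≤ 1 := abs_le.2 ⟨hz₂, hz₂'⟩
  have hbm : ∀ m : ℕ, (0:ℝ) < (m : ℝ) + a := fun m => by positivity
  have hs₂0 : 0 < s₂ - 1 := by linarith
  set G : ℕ → ℝ → ℝ := fun m y => (Real.Gamma s₁ * (z₁ ^ m / ((m : ℝ) + a) ^ s₁))
      * (y ^ (s₂ - 1) * Real.exp (-(((m : ℝ) + a) * y)) / (Real.exp y - z₂)) with hG
  have hmeas : ∀ m : ℕ, AEStronglyMeasurable (G m) (volume.restrict (Ioi 0)) := by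
    intro m
    apply Measurable.aestronglyMeasurable
    fun_prop
  have hbound : ∀ m : ℕ, ∀ y ∈ Ioi (0:ℝ), ‖G m y‖
      ≤ |Real.Gamma s₁ * (z₁ ^ m / ((m : ℝ) + a) ^ s₁)|
        * (y ^ ((s₂ - 1) - 1) * Real.exp (-(((m : ℝ) + a) * y))) := by
    intro m y hy
    have hy0 : 0 < y := hy
    have hD : y ≤ Real.exp y - z₂ := by linarith [Real.add_one_le_exp y]
    have hD0 : 0 < Real.exp y - z₂ := lt_of_lt_of_le hy0 hD
    have hP : 0 ≤ y ^ (s₂ - 1) * Real.exp (-(((m : ℝ) + a) * y)) := by positivity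
    have e1 : y ^ ((s₂ - 1) - 1) * Real.exp (-(((m : ℝ) + a) * y))
        = (y ^ (s₂ - 1) * Real.exp (-(((m : ℝ) + a) * y))) / y := by
      rw [Real.rpow_sub hy0, Real.rpow_one]; ring
    have step : ‖y ^ (s₂ - 1) * Real.exp (-(((m : ℝ) + a) * y)) / (Real.exp y - z₂)‖
        ≤ y ^ ((s₂ - 1) - 1) * Real.exp (-(((m : ℝ) + a) * y)) := by
      rw [Real.norm_of_nonneg (div_nonneg hP hD0.le), e1]
      gcongr
    calc ‖G m y‖ = |Real.Gamma s₁ * (z₁ ^ m / ((m : ℝ) + a) ^ s₁)|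
          * ‖y ^ (s₂ - 1) * Real.exp (-(((m : ℝ) + a) * y)) / (Real.exp y - z₂)‖ := by
          simp only [hG, norm_mul, Real.norm_eq_abs]
          rw [abs_mul]
      _ ≤ _ := mul_le_mul_of_nonneg_left step (abs_nonneg _)
  have hdomint : ∀ m : ℕ, Integrable (fun y : ℝ =>
      |Real.Gamma s₁ * (z₁ ^ m / ((m : ℝ) + a) ^ s₁)|
        * (y ^ ((s₂ - 1) - 1) * Real.exp (-(((m : ℝ) + a) * y))))
      (volume.restrict (Ioi 0)) := fun m =>
    (integrableOn_rpow_exp hs₂0 (hbm m)).const_mul _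
  have hGint : ∀ m, Integrable (G m) (volume.restrict (Ioi 0)) := fun m =>
    Integrable.mono' (hdomint m) (hmeas m)
      ((ae_restrict_iff' measurableSet_Ioi).2 (Filter.Eventually.of_forall (hbound m)))
  have hGsum : Summable fun m => ∫ y in Ioi (0:ℝ), ‖G m y‖ := by
    refine Summable.of_nonneg_of_le (fun m => integral_nonneg fun y => norm_nonneg _)
      (fun m => ?_)
      (((summable_aux ha hs₁).mul_left (Real.Gamma s₁)).mul_right
        ((1 / a) ^ (s₂ - 1) * Real.Gamma (s₂ - 1)))
    have h1 : ∫ y in Ioi (0:ℝ), ‖G m y‖ ≤ ∫ y in Ioi (0:ℝ),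
        |Real.Gamma s₁ * (z₁ ^ m / ((m : ℝ) + a) ^ s₁)|
          * (y ^ ((s₂ - 1) - 1) * Real.exp (-(((m : ℝ) + a) * y))) :=
      integral_mono_ae (hGint m).norm (hdomint m)
        ((ae_restrict_iff' measurableSet_Ioi).2 (Filter.Eventually.of_forall (hbound m)))
    have h2 : ∫ y in Ioi (0:ℝ),
        |Real.Gamma s₁ * (z₁ ^ m / ((m : ℝ) + a) ^ s₁)|
          * (y ^ ((s₂ - 1) - 1) * Real.exp (-(((m : ℝ) + a) * y)))
        = |Real.Gamma s₁ * (z₁ ^ m / ((m : ℝ) + a) ^ s₁)|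
          * ((1 / ((m : ℝ) + a)) ^ (s₂ - 1) * Real.Gamma (s₂ - 1)) := by
      rw [integral_const_mul, Real.integral_rpow_mul_exp_neg_mul_Ioi hs₂0 (hbm m)]
    have hc1 : |Real.Gamma s₁ * (z₁ ^ m / ((m : ℝ) + a) ^ s₁)|
        ≤ Real.Gamma s₁ * (1 / ((m : ℝ) + a)) ^ s₁ := by
      rw [abs_mul, abs_of_pos (Real.Gamma_pos_of_pos (show (0:ℝ) < s₁ by linarith)), abs_div, abs_pow,
        abs_of_pos (Real.rpow_pos_of_pos (hbm m) _),
        Real.div_rpow (by norm_num) (hbm m).le, Real.one_rpow]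
      gcongr <;> first
        | exact pow_le_one₀ (abs_nonneg _) hz₁a
        | exact Real.Gamma_nonneg_of_nonneg (show (0:ℝ) ≤ s₁ by linarith)
        | positivity
    have hm0 : (0:ℝ) ≤ (m : ℝ) := Nat.cast_nonneg m
    have hc2 : (1 / ((m : ℝ) + a)) ^ (s₂ - 1) ≤ (1 / a) ^ (s₂ - 1) :=
      Real.rpow_le_rpow (by positivity)
        (one_div_le_one_div_of_le ha (by linarith)) (by linarith)
    refine le_trans h1 (le_trans (le_of_eq h2) ?_)
    exact mul_le_mul hc1 (mul_le_mul_of_nonneg_right hc2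
      (Real.Gamma_nonneg_of_nonneg (show (0:ℝ) ≤ s₂ - 1 by linarith))) (by positivity) (by positivity)
  have step1 : (∫ y in Ioi (0 : ℝ), (y ^ (s₂ - 1) / (Real.exp y - z₂))
          * ∫ x in Ioi (0 : ℝ),
              x ^ (s₁ - 1) * Real.exp ((1 - a) * (x + y)) / (Real.exp (x + y) - z₁))
      = ∫ y in Ioi (0:ℝ), ∑' m : ℕ, G m y := by
    refine setIntegral_congr_fun measurableSet_Ioi fun y hy => ?_
    have hy0 : 0 < y := hy
    rw [inner_integral hs₁ ha hz₁a hy0, ← tsum_mul_left, ← tsum_mul_left]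
    refine tsum_congr fun m => ?_
    simp only [hG]
    ring
  rw [step1, ← integral_tsum_of_summable_integral_norm hGint hGsum, ← tsum_mul_left]
  refine tsum_congr fun m => ?_
  show _ = ∫ y in Ioi (0:ℝ), (Real.Gamma s₁ * (z₁ ^ m / ((m : ℝ) + a) ^ s₁))
      * (y ^ (s₂ - 1) * Real.exp (-(((m : ℝ) + a) * y)) / (Real.exp y - z₂))
  rw [integral_const_mul, outer_inner hs₂ (hbm m) hz₂a]
  have huv : (∑' n : ℕ, z₂ ^ n / ((m : ℝ) + ((n : ℝ) + 1) + a) ^ s₂)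
      = ∑' n : ℕ, z₂ ^ n / ((n : ℝ) + 1 + ((m : ℝ) + a)) ^ s₂ :=
    tsum_congr fun n => by
      rw [show (m : ℝ) + ((n : ℝ) + 1) + a = (n : ℝ) + 1 + ((m : ℝ) + a) from by ring]
  rw [huv]
  ring
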